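/- With η, κ, ρ as above and A_± := √(√(1-κ²) ± Re(η)), the following identities hold: ρ = A₊A₋ and η - i e^{iφ} = A₊², where e^{iφ} = κ + i√(1-κ²). Consequently ker(C + i e^{iφ}) = ℂ·(A₋, A₊)ᵀ. -/

import Mathlib

open Complex

/-- With A_± = √(√(1-κ²) ± Re η): ρ = A₊A₋, η - i e^{iφ} = A₊², and
ker(C + i e^{iφ}) = ℂ·(A₋, A₊)ᵀ. -/
theorem stmt_6 (η : ℂ) (hη : ‖η‖ < 1)
    (κ : ℝ) (hκdef : κ = η.im) (hκ : κ ∈ Set.Ioo (-1:ℝ) 1)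
    (ρ : ℝ) (hρ : ρ = Real.sqrt (1 - ‖η‖ ^ 2))
    (eiφ : ℂ) (heiφ : eiφ = (κ:ℂ) + I * (Real.sqrt (1 - κ^2) : ℝ))
    (C : Matrix (Fin 2) (Fin 2) ℂ) (hC : C = !![-η, (ρ:ℂ); (ρ:ℂ), (starRingEnd ℂ) η])
    (Ap Am : ℝ)
    (hAp : Ap = Real.sqrt (Real.sqrt (1 - κ^2) + η.re))
    (hAm : Am = Real.sqrt (Real.sqrt (1 - κ^2) - η.re)) :
    ρ = Ap * Am ∧
    η - I * eiφ = ((Ap^2 : ℝ) : ℂ) ∧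
    (∀ v : Fin 2 → ℂ, (C + (I * eiφ) • (1 : Matrix (Fin 2) (Fin 2) ℂ)).mulVec v = 0 ↔
      ∃ c : ℂ, v = c • ![(Am : ℂ), (Ap : ℂ)]) := by
  obtain ⟨hκ1, hκ2⟩ := hκ
  have hk2 : (0:ℝ) < 1 - κ^2 := by nlinarith
  set a := Real.sqrt (1 - κ^2) with ha
  have ha0 : 0 ≤ a := Real.sqrt_nonneg _
  have ha2 : a^2 = 1 - κ^2 := Real.sq_sqrt hk2.le
  have habs : ‖η‖ ^ 2 = η.re^2 + κ^2 := by
    rw [hκdef, Complex.sq_norm, Complex.normSq_apply]; ring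
  have habs0 : (0:ℝ) ≤ ‖η‖ := norm_nonneg η
  have hpos : (0:ℝ) < 1 - ‖η‖ ^ 2 := by nlinarith
  have hρpos : 0 < ρ := by rw [hρ]; exact Real.sqrt_pos.mpr hpos
  have hρ2 : ρ^2 = a^2 - η.re^2 := by
    rw [hρ, Real.sq_sqrt hpos.le, ha2, habs]; ring
  have hp : 0 < a + η.re := by nlinarith
  have hm : 0 < a - η.re := by nlinarith
  have hAp2 : Ap^2 = a + η.re := by rw [hAp]; exact Real.sq_sqrt hp.le
  have hAm2 : Am^2 = a - η.re := by rw [hAm]; exact Real.sq_sqrt hm.le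
  have hAppos : 0 < Ap := by rw [hAp]; exact Real.sqrt_pos.mpr hp
  have hAmpos : 0 < Am := by rw [hAm]; exact Real.sqrt_pos.mpr hm
  have hη' : η = (η.re : ℂ) + (κ : ℂ) * I := by
    rw [hκdef]; exact (Complex.re_add_im η).symm
  have key : ρ = Ap * Am := by
    rw [hρ, hAp, hAm, ← Real.sqrt_mul hp.le]
    congr 1
    rw [habs]; nlinarith
  have hηc : (starRingEnd ℂ) η = (η.re : ℂ) - (κ : ℂ) * I := by
    apply Complex.ext <;> simp [hκdef]
  have cAp2 : ((Ap:ℂ))^2 = (a:ℂ) + (η.re:ℂ) := by exact_mod_cast congrArg Complex.ofReal hAp2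
  have cAm2 : ((Am:ℂ))^2 = (a:ℂ) - (η.re:ℂ) := by exact_mod_cast congrArg Complex.ofReal hAm2
  have e00 : -η + I * eiφ = -((Ap:ℂ))^2 := by
    rw [heiφ]
    linear_combination -hη' + (a:ℂ) * Complex.I_sq + cAp2
  have e11 : (starRingEnd ℂ) η + I * eiφ = -((Am:ℂ))^2 := by
    rw [heiφ]
    linear_combination hηc + (a:ℂ) * Complex.I_sq + cAm2
  refine ⟨key, ?_, ?_⟩
  · rw [heiφ]
    push_cast
    linear_combination hη' + (-(a:ℂ)) * Complex.I_sq - cAp2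
  · intro v
    have hM : (C + (I * eiφ) • (1 : Matrix (Fin 2) (Fin 2) ℂ)) =
        !![(-(Ap^2:ℝ) : ℂ), (ρ:ℂ); (ρ:ℂ), (-(Am^2:ℝ) : ℂ)] := by
      rw [hC]
      ext i j
      fin_cases i <;> fin_cases j <;> simp [Matrix.one_apply]
      · push_cast
        linear_combination e00
      · push_cast
        linear_combination e11
    rw [hM]
    have hApne : (Ap : ℂ) ≠ 0 := by
      simpa using (ne_of_gt hAppos)
    constructor
    · intro hv
      have h0 := congrFun hv 0
      simp [Matrix.mulVec, dotProduct, Fin.sum_univ_two, key] at h0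
      have hrel : (Ap : ℂ) * v 0 = (Am : ℂ) * v 1 := by
        apply mul_left_cancel₀ hApne
        push_cast at h0 ⊢
        linear_combination -h0
      refine ⟨v 1 / (Ap : ℂ), ?_⟩
      funext i
      fin_cases i <;> simp
      · field_simp
        linear_combination hrel
      · field_simp
    · rintro ⟨c, rfl⟩
      funext i
      fin_cases i <;>
        simp [Matrix.mulVec, dotProduct, Fin.sum_univ_two, key] <;>
        push_cast <;> ring
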